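/- Fix β > 0 and ε ∈ (0, 1/2]. Consider the probability distributions q₀ ∝ (e^{2β}, 1, e^{−β}, e^{−β}) and q₁ ∝ (e^{2β}, 1, e^{−β+2βε}, e^{−β−2βε}) on four outcomes. Then the KL divergence satisfies D(q₁ ‖ q₀) ≤ 8 β² ε² e^{−2β}. -/

import Mathlib

open Real

/-- KL divergence bound `D(q₁‖q₀) ≤ 8β²ε²e^{−2β}` for the Gibbs distributions
`q₀ ∝ (e^{2β}, 1, e^{−β}, e^{−β})` and `q₁ ∝ (e^{2β}, 1, e^{−β+2βε}, e^{−β−2βε})`,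
when `0 < ε ≤ 1/2`. -/
theorem stmt11 (β ε : ℝ) (hβ : 0 < β) (hε : 0 < ε) (hε' : ε ≤ 1 / 2) :
    let Z₀ : ℝ := exp (2 * β) + 1 + 2 * exp (-β)
    let Z₁ : ℝ := exp (2 * β) + 1 + exp (-β + 2 * β * ε) + exp (-β - 2 * β * ε)
    let q₀ : Fin 4 → ℝ := fun j => ![exp (2 * β), 1, exp (-β), exp (-β)] j / Z₀
    let q₁ : Fin 4 → ℝ := fun j =>
      ![exp (2 * β), 1, exp (-β + 2 * β * ε), exp (-β - 2 * β * ε)] j / Z₁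
    ∑ j, q₁ j * Real.log (q₁ j / q₀ j) ≤ 8 * β ^ 2 * ε ^ 2 * exp (-2 * β) := by
  intro Z₀ Z₁ q₀ q₁
  set t : ℝ := 2 * β * ε with htdef
  have ht : 0 < t := by positivity
  have htβ : t ≤ β := by nlinarith
  have hZ₀ : 0 < Z₀ := by positivity
  have hZ₁ : 0 < Z₁ := by positivity
  have hZ0' : Z₀ = exp (2 * β) + 1 + 2 * exp (-β) := rfl
  have hZ1' : Z₁ = exp (2 * β) + 1 + exp (-β + t) + exp (-β - t) := rfl
  have huv : exp (-β + t) * exp (-β - t) = exp (-β) * exp (-β) := by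
    rw [← exp_add, ← exp_add]; ring_nf
  have hZle : Z₀ ≤ Z₁ := by
    rw [hZ0', hZ1']
    nlinarith [sq_nonneg (exp (-β + t) - exp (-β - t)),
      exp_pos (-β + t), exp_pos (-β - t), exp_pos (-β)]
  have hL : log Z₀ - log Z₁ ≤ 0 := by
    have := Real.log_le_log hZ₀ hZle
    linarith
  have hq0 : q₁ 0 = exp (2 * β) / Z₁ := rfl
  have hq1 : q₁ 1 = 1 / Z₁ := rfl
  have hq2 : q₁ 2 = exp (-β + t) / Z₁ := rfl
  have hq3 : q₁ 3 = exp (-β - t) / Z₁ := rfl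
  have hp0 : q₀ 0 = exp (2 * β) / Z₀ := rfl
  have hp1 : q₀ 1 = 1 / Z₀ := rfl
  have hp2 : q₀ 2 = exp (-β) / Z₀ := rfl
  have hp3 : q₀ 3 = exp (-β) / Z₀ := rfl
  have hsum : ∑ j, q₁ j * Real.log (q₁ j / q₀ j)
      = (log Z₀ - log Z₁) + t * (exp (-β + t) - exp (-β - t)) / Z₁ := by
    have e0 : q₁ 0 / q₀ 0 = Z₀ / Z₁ := by
      rw [hq0, hp0]; field_simp
    have e1 : q₁ 1 / q₀ 1 = Z₀ / Z₁ := by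
      rw [hq1, hp1]; field_simp
    have e2 : q₁ 2 / q₀ 2 = exp t * (Z₀ / Z₁) := by
      rw [hq2, hp2, show (-β + t) = t + (-β) by ring, exp_add]
      field_simp
    have e3 : q₁ 3 / q₀ 3 = exp (-t) * (Z₀ / Z₁) := by
      rw [hq3, hp3, show (-β - t) = (-t) + (-β) by ring, exp_add]
      field_simp
    rw [Fin.sum_univ_four, e0, e1, e2, e3, hq0, hq1, hq2, hq3]
    rw [Real.log_mul (exp_ne_zero t) (by positivity),
        Real.log_mul (exp_ne_zero (-t)) (by positivity),
        Real.log_div (ne_of_gt hZ₀) (ne_of_gt hZ₁), Real.log_exp, Real.log_exp]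
    rw [hZ1']
    have hZ1pos : (0:ℝ) < exp (2 * β) + 1 + exp (-β + t) + exp (-β - t) := by positivity
    field_simp
    ring
  rw [hsum]
  have hkey : exp t - exp (-t) ≤ 2 * t * exp t := by
    have h1 : -(2 * t) + 1 ≤ exp (-(2 * t)) := Real.add_one_le_exp _
    have h2 : exp (-(2 * t)) * exp t = exp (-t) := by rw [← exp_add]; ring_nf
    nlinarith [exp_pos t]
  have hetb : exp (t - β) ≤ 1 := Real.exp_le_one_iff.mpr (by linarith)
  have hdiff : exp (-β + t) - exp (-β - t) ≤ 2 * t := by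
    calc exp (-β + t) - exp (-β - t)
        = exp (-β) * (exp t - exp (-t)) := by
          rw [mul_sub, ← exp_add, ← exp_add]; ring_nf
      _ ≤ exp (-β) * (2 * t * exp t) :=
          mul_le_mul_of_nonneg_left hkey (exp_pos _).le
      _ = 2 * t * exp (t - β) := by
          rw [show t - β = t + -β by ring, exp_add]; ring
      _ ≤ 2 * t * 1 :=
          mul_le_mul_of_nonneg_left hetb (by positivity)
      _ = 2 * t := by ring
  have hZexp : exp (2 * β) ≤ Z₁ := by
    rw [hZ1']
    linarith [exp_pos (-β + t), exp_pos (-β - t)]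
  have hZinv : 1 / Z₁ ≤ exp (-2 * β) := by
    have h1 : 1 / Z₁ ≤ 1 / exp (2 * β) := one_div_le_one_div_of_le (exp_pos _) hZexp
    have h2 : (1:ℝ) / exp (2 * β) = exp (-2 * β) := by
      rw [one_div, ← exp_neg]; ring_nf
    linarith [h1, h2.le, h2.ge]
  have hpos : 0 ≤ exp (-β + t) - exp (-β - t) := by
    have : exp (-β - t) ≤ exp (-β + t) := exp_le_exp.mpr (by linarith)
    linarith
  have hbound : t * (exp (-β + t) - exp (-β - t)) / Z₁ ≤ 2 * t ^ 2 * exp (-2 * β) := by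
    calc t * (exp (-β + t) - exp (-β - t)) / Z₁
        ≤ t * (2 * t) / Z₁ := by gcongr
      _ = 2 * t ^ 2 * (1 / Z₁) := by ring
      _ ≤ 2 * t ^ 2 * exp (-2 * β) := by
          have h2t : (0:ℝ) ≤ 2 * t ^ 2 := by positivity
          exact mul_le_mul_of_nonneg_left hZinv h2t
  have h2t : 8 * β ^ 2 * ε ^ 2 = 2 * t ^ 2 := by rw [htdef]; ring
  rw [h2t]
  linarith
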